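/- Let d₁, d₂, M be positive integers with d₂M ≥ d₁, identify ℂ^{d₂M} ≅ ℂ^{d₂} ⊗ ℂ^{M}, and let G ∈ M_{d₂M×d₁}(ℂ) be such that G†G is invertible. Set V := G(G†G)^{-1/2} (an isometry) and define Kraus operators A_i := (𝟙_{d₂} ⊗ ⟨i|)V ∈ M_{d₂×d₁}(ℂ) for i = 1,…,M. Define G̃ ∈ M_{d₁d₂×M}(ℂ) by G̃_{(j,k),i} := G_{(j,i),k} for j ∈ {1,…,d₂}, k ∈ {1,…,d₁}, i ∈ {1,…,M} (rows of G indexed by pairs in {1,…,d₂}×{1,…,M}, rows of G̃ by pairs in {1,…,d₂}×{1,…,d₁}). Then: (i) [Tr_{d₂} ⊗ id_{d₁}](G̃G̃†) = Gᵀ Ḡ; and (ii) the Choi matrix of the channel with Kraus operators A_i satisfies Σ_{i=1}^M |A_i⟩⟩⟨⟨A_i| = (𝟙_{d₂} ⊗ (GᵀḠ)^{-1/2}) G̃G̃† (𝟙_{d₂} ⊗ (GᵀḠ)^{-1/2}). (This is the deterministic identity underlying the equality μ^{Stinespring}_{d₁,d₂;M} = μ^{Choi}_{d₁,d₂;M}.)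 -/

import Mathlib

open Matrix
open scoped Kronecker ComplexOrder

noncomputable section

/-- The positive semidefinite square root of a positive semidefinite matrix
(the definition of `Matrix.PosSemidef.sqrt` in the older Mathlib, since removed). -/
def Matrix.PosSemidef.sqrt {n 𝕜 : Type*} [Fintype n] [DecidableEq n] [RCLike 𝕜]
    {A : Matrix n n 𝕜} (hA : A.PosSemidef) : Matrix n n 𝕜 :=
  hA.1.eigenvectorUnitary.1 * diagonal ((↑) ∘ (Real.sqrt ∘ hA.1.eigenvalues)) *
  (star hA.1.eigenvectorUnitary : Matrix n n 𝕜)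

open scoped MatrixOrder in
theorem Matrix.PosSemidef.sqrt_eq_cfcSqrt {n 𝕜 : Type*} [Fintype n] [DecidableEq n] [RCLike 𝕜]
    {A : Matrix n n 𝕜} (hA : A.PosSemidef) : hA.sqrt = CFC.sqrt A := by
  rw [CFC.sqrt_eq_real_sqrt A hA.nonneg, cfcₙ_eq_cfc, hA.1.cfc_eq]
  rfl

open scoped MatrixOrder in
theorem Matrix.PosSemidef.sq_sqrt {n 𝕜 : Type*} [Fintype n] [DecidableEq n] [RCLike 𝕜]
    {A : Matrix n n 𝕜} (hA : A.PosSemidef) : hA.sqrt ^ 2 = A := by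
  rw [hA.sqrt_eq_cfcSqrt]
  exact CFC.sq_sqrt A hA.nonneg

open scoped MatrixOrder in
theorem Matrix.PosSemidef.posSemidef_sqrt {n 𝕜 : Type*} [Fintype n] [DecidableEq n] [RCLike 𝕜]
    {A : Matrix n n 𝕜} (hA : A.PosSemidef) : hA.sqrt.PosSemidef := by
  rw [hA.sqrt_eq_cfcSqrt]
  exact (CFC.sqrt_nonneg A).posSemidef

open scoped MatrixOrder in
theorem Matrix.PosSemidef.eq_sqrt_of_sq_eq {n 𝕜 : Type*} [Fintype n] [DecidableEq n] [RCLike 𝕜]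
    {A B : Matrix n n 𝕜} (hA : A.PosSemidef) (hB : B.PosSemidef) (hAB : A ^ 2 = B) :
    A = hB.sqrt := by
  rw [hB.sqrt_eq_cfcSqrt]
  refine (CFC.sqrt_unique (a := B) (b := A) ?_ hA.nonneg).symm
  rw [← hAB, pow_two]

/-- Vectorization of a rectangular matrix: `|A⟩⟩_{(j,i)} = A_{ji}`. -/
def vecOf {d₂ d₁ : ℕ} (A : Matrix (Fin d₂) (Fin d₁) ℂ) : Fin d₂ × Fin d₁ → ℂ :=
  fun p => A p.1 p.2

/-- Partial trace over the first tensor factor: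
`([Tr_{d₂} ⊗ id_{d₁}]X)_{i,i'} = Σ_j X_{(j,i),(j,i')}`. -/
def ptrFirst {d₂ d₁ : ℕ} (X : Matrix (Fin d₂ × Fin d₁) (Fin d₂ × Fin d₁) ℂ) :
    Matrix (Fin d₁) (Fin d₁) ℂ :=
  Matrix.of fun i i' => ∑ j : Fin d₂, X (j, i) (j, i')

/-- The deterministic identity underlying `μ^{Stinespring} = μ^{Choi}`: with
`V = G(G†G)^{-1/2}`, Kraus operators `A_i = (𝟙_{d₂} ⊗ ⟨i|)V`, and
`G̃_{(j,k),i} = G_{(j,i),k}`, one has `[Tr_{d₂} ⊗ id](G̃G̃†) = Gᵀ Ḡ` and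
`Σ |A_i⟩⟩⟨⟨A_i| = (𝟙 ⊗ (GᵀḠ)^{-1/2}) G̃G̃† (𝟙 ⊗ (GᵀḠ)^{-1/2})`. -/
theorem stinespring_choi_identity (d₁ d₂ M : ℕ) (hd₁ : 0 < d₁) (hd₂ : 0 < d₂) (hM : 0 < M)
    (hdim : d₁ ≤ d₂ * M)
    (G : Matrix (Fin d₂ × Fin M) (Fin d₁) ℂ)
    (hinv : IsUnit (Gᴴ * G).det)
    (hTpsd : (Gᵀ * G.map (starRingEnd ℂ)).PosSemidef)
    (V : Matrix (Fin d₂ × Fin M) (Fin d₁) ℂ)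
    (hV : V = G * ((Matrix.posSemidef_conjTranspose_mul_self G).sqrt)⁻¹)
    (A : Fin M → Matrix (Fin d₂) (Fin d₁) ℂ)
    (hA : ∀ i, A i = Matrix.of fun j k => V (j, i) k)
    (Gt : Matrix (Fin d₂ × Fin d₁) (Fin M) ℂ)
    (hGt : Gt = Matrix.of fun p i => G (p.1, i) p.2) :
    ptrFirst (Gt * Gtᴴ) = Gᵀ * G.map (starRingEnd ℂ) ∧
    (∑ i, vecMulVec (vecOf (A i)) (star (vecOf (A i)))) =
      ((1 : Matrix (Fin d₂) (Fin d₂) ℂ) ⊗ₖ (hTpsd.sqrt)⁻¹) * (Gt * Gtᴴ) *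
        ((1 : Matrix (Fin d₂) (Fin d₂) ℂ) ⊗ₖ (hTpsd.sqrt)⁻¹) := by
  set hS := Matrix.posSemidef_conjTranspose_mul_self G
  set S := hS.sqrt with hSdef
  -- transpose relation
  have hGT : Gᵀ * G.map (starRingEnd ℂ) = (Gᴴ * G)ᵀ := by
    rw [Matrix.transpose_mul]
    rfl
  have hsqS : S ^ 2 = Gᴴ * G := hS.sq_sqrt
  have hST : Sᵀ = hTpsd.sqrt := by
    refine Matrix.PosSemidef.eq_sqrt_of_sq_eq (hS.posSemidef_sqrt.transpose) hTpsd ?_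
    rw [pow_two, ← Matrix.transpose_mul, ← pow_two, hsqS, ← hGT]
  constructor
  · ext k k'
    simp only [ptrFirst, ptrFirst, Matrix.of_apply, Matrix.mul_apply, hGt,
      Matrix.conjTranspose_apply, Matrix.transpose_apply, Matrix.map_apply,
      RCLike.star_def]
    rw [Fintype.sum_prod_type]
  · have hSinvH : (S⁻¹).IsHermitian := hS.posSemidef_sqrt.1.inv
    have hTinv : (hTpsd.sqrt)⁻¹ = (S⁻¹)ᵀ := by
      rw [← hST, Matrix.transpose_nonsing_inv]
    have hconj : ∀ m n : Fin d₁, star (S⁻¹ m n) = S⁻¹ n m := by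
      intro m n
      conv_rhs => rw [← hSinvH]
      rfl
    ext ⟨j, k⟩ ⟨j', k'⟩
    simp only [Finset.sum_apply, Matrix.sum_apply, Matrix.vecMulVec_apply, vecOf, hA, Matrix.of_apply,
      Pi.star_apply, hV, Matrix.mul_apply, hTinv, Matrix.kroneckerMap_apply,
      Matrix.conjTranspose_apply, Matrix.transpose_apply, hGt, Matrix.one_apply,
      Fintype.sum_prod_type, ite_mul, mul_ite, one_mul, mul_one, zero_mul, mul_zero,
      Finset.sum_ite_eq, Finset.sum_ite_eq', Finset.mem_univ, if_true,
      star_sum, star_mul', hconj, Finset.mul_sum, Finset.sum_mul]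
    simp only [Finset.sum_ite_irrel, Finset.sum_const_zero, Finset.sum_ite_eq',
      Finset.sum_ite_eq, Finset.mem_univ, if_true]
    conv_lhs => rw [Finset.sum_comm]
    refine Finset.sum_congr rfl fun a _ => ?_
    rw [Finset.sum_comm]
    refine Finset.sum_congr rfl fun b _ => ?_
    refine Finset.sum_congr rfl fun c _ => ?_
    ring
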